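/- For any partial function H, the optimal approximation factor α* for Coverage Approximate Extension satisfies α* ≥ 1/κ, where κ is the replacement ratio of H. -/

import Mathlib

open Finset

/-- `f` is a coverage function. -/
def IsCoverage (m : ℕ) (f : Finset (Fin m) → ℝ) : Prop :=
  ∃ (k : ℕ) (wt : Fin k → ℝ) (A : Fin m → Finset (Fin k)),
    (∀ u, 0 ≤ wt u) ∧ ∀ T : Finset (Fin m), f T = ∑ u ∈ T.biUnion A, wt u

/-- The optimal approximation factor `α*` for Coverage Approximate Extension:
the least `α ≥ 1` such that some coverage function `f` satisfies
`f_i ≤ f(T_i) ≤ α f_i` for all `i`. -/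
noncomputable def alphaStar (m n : ℕ) (T : Fin n → Finset (Fin m)) (fv : Fin n → ℝ) : ℝ :=
  sInf {α : ℝ | 1 ≤ α ∧ ∃ f : Finset (Fin m) → ℝ, IsCoverage m f ∧
    ∀ i, fv i ≤ f (T i) ∧ f (T i) ≤ α * fv i}

/-- The replacement ratio `κ`: the minimum over vertices `v` and replacements
`R ⊆ A \ {v}` with `N(R) ⊇ N(v)` of `(∑_{w ∈ R} f_w) / f_v`. -/
noncomputable def kappa (m n : ℕ) (T : Fin n → Finset (Fin m)) (fv : Fin n → ℝ) : ℝ :=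
  sInf {c : ℝ | ∃ (v : Fin n) (R : Finset (Fin n)), v ∉ R ∧ T v ⊆ R.biUnion T ∧
    c = (∑ w ∈ R, fv w) / fv v}

lemma sum_union_le' {α : Type*} [DecidableEq α] (s t : Finset α) (g : α → ℝ)
    (hg : ∀ x, 0 ≤ g x) : ∑ x ∈ s ∪ t, g x ≤ ∑ x ∈ s, g x + ∑ x ∈ t, g x := by
  rw [← Finset.sum_union_inter]
  have : 0 ≤ ∑ x ∈ s ∩ t, g x := Finset.sum_nonneg fun x _ => hg x
  linarith

lemma sum_biUnion_le' {ι α : Type*} [DecidableEq α] (s : Finset ι) (B : ι → Finset α)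
    (g : α → ℝ) (hg : ∀ x, 0 ≤ g x) :
    ∑ x ∈ s.biUnion B, g x ≤ ∑ i ∈ s, ∑ x ∈ B i, g x := by
  classical
  induction s using Finset.induction_on with
  | empty => simp
  | insert _ _ hnot ih =>
    rename_i a s
    rw [Finset.biUnion_insert, Finset.sum_insert hnot]
    exact le_trans (sum_union_le' _ _ g hg) (by linarith)

/-- For any partial function, `α* ≥ 1/κ`. -/
theorem stmt_9 (m n : ℕ) (T : Fin n → Finset (Fin m)) (fv : Fin n → ℝ)
    (hfv : ∀ i, 0 < fv i) (hT : ∀ i, (T i).Nonempty) :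
    1 / kappa m n T fv ≤ alphaStar m n T fv := by
  classical
  -- alphaStar set is nonempty
  set S := {α : ℝ | 1 ≤ α ∧ ∃ f : Finset (Fin m) → ℝ, IsCoverage m f ∧
    ∀ i, fv i ≤ f (T i) ∧ f (T i) ≤ α * fv i} with hS
  set K := {c : ℝ | ∃ (v : Fin n) (R : Finset (Fin n)), v ∉ R ∧ T v ⊆ R.biUnion T ∧
    c = (∑ w ∈ R, fv w) / fv v} with hK
  have hCnn : (0:ℝ) ≤ ∑ i, fv i := Finset.sum_nonneg fun i _ => (hfv i).le
  have hSne : S.Nonempty := by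
    set C : ℝ := ∑ i, fv i with hC
    set α₀ : ℝ := 1 + ∑ i, C * m / fv i with hα₀
    refine ⟨α₀, ?_, fun Tt => ∑ u ∈ Tt.biUnion (fun j => {j}), C, ⟨m, fun _ => C, fun j => {j},
      fun _ => hCnn, fun _ => rfl⟩, fun i => ?_⟩
    · have : 0 ≤ ∑ i, C * m / fv i :=
        Finset.sum_nonneg fun i _ =>
          div_nonneg (mul_nonneg hCnn (Nat.cast_nonneg m)) (hfv i).le
      rw [hα₀]; linarith
    have hbu : ∀ Tt : Finset (Fin m), Tt.biUnion (fun j => ({j} : Finset (Fin m))) = Tt := by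
      intro Tt; ext x; simp
    simp only [hbu, Finset.sum_const, nsmul_eq_mul]
    constructor
    · have h1 : (1:ℝ) ≤ (T i).card := by
        have := Finset.card_pos.mpr (hT i); exact_mod_cast this
      have h2 : fv i ≤ C := Finset.single_le_sum (fun j _ => (hfv j).le) (Finset.mem_univ i)
      nlinarith
    · have h1 : ((T i).card : ℝ) ≤ m := by
        exact_mod_cast Finset.card_le_card (Finset.subset_univ (T i)) |>.trans
          (by simp [Finset.card_univ] )
      have h2 : C * m / fv i ≤ ∑ j, C * m / fv j :=
        Finset.single_le_sum (fun j _ =>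
          div_nonneg (mul_nonneg hCnn (Nat.cast_nonneg m)) (hfv j).le) (Finset.mem_univ i)
      have h3 : C * m / fv i * fv i = C * m :=
        div_mul_cancel₀ _ (hfv i).ne'
      have h4 : C * m ≤ α₀ * fv i := by
        have := mul_le_mul_of_nonneg_right h2 (hfv i).le
        rw [h3] at this
        have h5 : (∑ j, C * m / fv j) * fv i ≤ α₀ * fv i := by
          apply mul_le_mul_of_nonneg_right _ (hfv i).le
          rw [hα₀]; linarith
        exact le_trans this h5
      have : ((T i).card : ℝ) * C ≤ C * m := by nlinarith
      linarith
  have key : ∀ α ∈ S, 1 / kappa m n T fv ≤ α := by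
    intro α hα
    obtain ⟨hα1, f, ⟨k, wt, A, hwt, hf⟩, hfi⟩ := hα
    have hαpos : (0:ℝ) < α := lt_of_lt_of_le one_pos hα1
    have hlb : ∀ c ∈ K, 1 / α ≤ c := by
      rintro c ⟨v, R, hvR, hcov, rfl⟩
      -- fv v ≤ f (T v) ≤ f(biUnion) ≤ ∑ f(T w) ≤ α ∑ fv w
      have hmono : f (T v) ≤ f (R.biUnion T) := by
        rw [hf, hf]
        apply Finset.sum_le_sum_of_subset_of_nonneg
        · exact Finset.biUnion_subset_biUnion_of_subset_left A hcov
        · intro x _ _; exact hwt x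
      have hsub : f (R.biUnion T) ≤ ∑ w ∈ R, f (T w) := by
        rw [hf]
        have : (R.biUnion T).biUnion A = R.biUnion (fun w => (T w).biUnion A) := by
          ext x; simp; tauto
        rw [this]
        refine le_trans (sum_biUnion_le' R _ wt hwt) ?_
        apply le_of_eq; exact Finset.sum_congr rfl fun w _ => (hf (T w)).symm
      have hsum : ∑ w ∈ R, f (T w) ≤ α * ∑ w ∈ R, fv w := by
        rw [Finset.mul_sum]
        exact Finset.sum_le_sum fun w _ => (hfi w).2
      have hchain : fv v ≤ α * ∑ w ∈ R, fv w :=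
        le_trans (hfi v).1 (le_trans hmono (le_trans hsub hsum))
      rw [div_le_div_iff₀ hαpos (hfv v)]
      linarith
    by_cases hKne : K.Nonempty
    · have hκ : 1 / α ≤ kappa m n T fv := le_csInf hKne hlb
      have hκpos : 0 < kappa m n T fv := lt_of_lt_of_le (by positivity) hκ
      rw [div_le_iff₀ hκpos]
      calc (1:ℝ) = α * (1/α) := by field_simp
        _ ≤ α * kappa m n T fv := by
            exact mul_le_mul_of_nonneg_left hκ hαpos.le
    · have : K = ∅ := Set.not_nonempty_iff_eq_empty.mp hKne
      rw [kappa, ← hK, this, Real.sInf_empty]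
      simp
      linarith
  exact le_csInf hSne key
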